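/- Let G be a simple game and G' the game arising from G by removing its null players. Then for every m, G is m-trade robust if and only if G' is m-trade robust. -/
import Mathlib


/-- `⟨X; Y⟩` is a trading transform: every player belongs to as many `X`s as `Y`s. -/
def TradingTransform {n j : ℕ} (X Y : Fin j → Finset (Fin n)) : Prop :=
  ∀ a : Fin n,
    (Finset.univ.filter (fun i => a ∈ X i)).card =
      (Finset.univ.filter (fun i => a ∈ Y i)).card

/-- The game with winning predicate `W` on the coalitions contained in `D` is
`m`-trade robust. -/
def TradeRobustOn {n : ℕ} (D : Finset (Fin n)) (W : Finset (Fin n) → Prop)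
    (m : ℕ) : Prop :=
  ¬ ∃ (j : ℕ) (_ : 0 < j) (_ : j ≤ m) (X Y : Fin j → Finset (Fin n)),
      (∀ i, X i ⊆ D) ∧ (∀ i, Y i ⊆ D) ∧ TradingTransform X Y ∧
      (∀ i, W (X i)) ∧ (∀ i, ¬ W (Y i))

lemma null_erase {n : ℕ} (W : Finset (Fin n) → Prop) (i : Fin n)
    (h : ∀ S, W (insert i S) ↔ W (S.erase i)) (S : Finset (Fin n)) :
    W S ↔ W (S.erase i) := by
  by_cases hi : i ∈ S
  · calc W S ↔ W (insert i (S.erase i)) := by rw [Finset.insert_erase hi]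
      _ ↔ W ((S.erase i).erase i) := h _
      _ ↔ W (S.erase i) := by rw [Finset.erase_idem]
  · rw [Finset.erase_eq_of_notMem hi]

lemma W_inter {n : ℕ} (W : Finset (Fin n) → Prop) (N' : Finset (Fin n))
    (hN' : ∀ i : Fin n, i ∈ N' ↔ ¬ (∀ S, W (insert i S) ↔ W (S.erase i)))
    (S : Finset (Fin n)) : W S ↔ W (S ∩ N') := by
  induction S using Finset.strongInduction with
  | _ S ih =>
    by_cases h : S ⊆ N'
    · rw [Finset.inter_eq_left.mpr h]
    · obtain ⟨i, hiS, hiN⟩ := Finset.not_subset.mp h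
      have hnull : ∀ T, W (insert i T) ↔ W (T.erase i) := by
        by_contra hc; exact hiN ((hN' i).mpr hc)
      have h2 : (S.erase i) ∩ N' = S ∩ N' := by
        ext a
        simp only [Finset.mem_inter, Finset.mem_erase]
        constructor
        · rintro ⟨⟨_, ha⟩, haN⟩; exact ⟨ha, haN⟩
        · rintro ⟨ha, haN⟩
          exact ⟨⟨fun hai => hiN (hai ▸ haN), ha⟩, haN⟩
      rw [null_erase W i hnull S, ih (S.erase i) (Finset.erase_ssubset hiS), h2]

/-- Removing null players does not affect `m`-trade robustness. -/
theorem stmt6 (n : ℕ) (W : Finset (Fin n) → Prop)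
    (hmono : ∀ S T, S ⊆ T → W S → W T)
    (N' : Finset (Fin n))
    (hN' : ∀ i : Fin n, i ∈ N' ↔ ¬ (∀ S, W (insert i S) ↔ W (S.erase i)))
    (m : ℕ) :
    TradeRobustOn Finset.univ W m ↔ TradeRobustOn N' W m := by
  constructor
  · rintro h ⟨j, hj, hjm, X, Y, _, _, ht, hWX, hWY⟩
    exact h ⟨j, hj, hjm, X, Y, fun i => Finset.subset_univ _,
      fun i => Finset.subset_univ _, ht, hWX, hWY⟩
  · rintro h ⟨j, hj, hjm, X, Y, _, _, ht, hWX, hWY⟩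
    apply h
    refine ⟨j, hj, hjm, fun i => X i ∩ N', fun i => Y i ∩ N',
      fun i => Finset.inter_subset_right, fun i => Finset.inter_subset_right,
      ?_, ?_, ?_⟩
    · intro a
      by_cases ha : a ∈ N'
      · simp only [Finset.mem_inter, ha, and_true]; exact ht a
      · simp [Finset.mem_inter, ha]
    · intro i; exact (W_inter W N' hN' (X i)).mp (hWX i)
    · intro i hw
      exact hWY i (hmono _ _ Finset.inter_subset_left hw)
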